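/- Let A be a unital Banach algebra and suppose a₀, a₁ are invertible isometries that are joined by a continuous path t ↦ a_t (t ∈ [0,1]) of elements satisfying ‖a_t‖ ≤ 1 and a_t b_t a_t = a_t for some continuous path of elements b_t with ‖b_t‖ ≤ 1, b_t a_t b_t = b_t, b₀ = a₀⁻¹, b₁ = a₁⁻¹. Then a₀ and a₁ are joined by a continuous path within the group of invertible isometries of A. -/
import Mathlib


open unitInterval

/-- The set of invertible isometries of a unital Banach algebra, viewed inside `A`. -/
def InvertibleIsometries (A : Type*) [NormedRing A] : Set A :=
  {x | ∃ u : Aˣ, (u : A) = x ∧ ‖(u : A)‖ = 1 ∧ ‖((u⁻¹ : Aˣ) : A)‖ = 1}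

/-- If two invertible isometries `a 0` and `a 1` of a unital Banach algebra are joined
by a continuous path `t ↦ a t` of norm-at-most-one elements admitting a continuous path
of "Moore–Penrose inverses" `t ↦ b t` (with `a t * b t * a t = a t`,
`b t * a t * b t = b t`, `‖b t‖ ≤ 1`, and `b` inverting `a` at the endpoints), then
`a 0` and `a 1` are joined by a continuous path within the invertible isometries. -/
theorem joinedIn_invertibleIsometries_of_MoorePenrose_path
    (A : Type*) [NormedRing A] [NormOneClass A] [NormedAlgebra ℂ A] [CompleteSpace A]
    (a b : I → A) (ha : Continuous a) (hb : Continuous b)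
    (hnorm : ∀ t, ‖a t‖ ≤ 1 ∧ ‖b t‖ ≤ 1)
    (hmp : ∀ t, a t * b t * a t = a t ∧ b t * a t * b t = b t)
    (u₀ u₁ : Aˣ) (hu₀ : (u₀ : A) = a 0) (hu₁ : (u₁ : A) = a 1)
    (hb₀ : b 0 = ((u₀⁻¹ : Aˣ) : A)) (hb₁ : b 1 = ((u₁⁻¹ : Aˣ) : A))
    (hiso₀ : a 0 ∈ InvertibleIsometries A) (hiso₁ : a 1 ∈ InvertibleIsometries A) :
    JoinedIn (InvertibleIsometries A) (a 0) (a 1) := by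
  -- Every `a t` is a unit with inverse `b t`.
  have key : ∀ t, a t * b t = 1 ∧ b t * a t = 1 := by
    set S : Set I := {t | a t * b t = 1 ∧ b t * a t = 1} with hS
    have hScl : IsClosed S := by
      apply IsClosed.inter
      · exact isClosed_eq (ha.mul hb) continuous_const
      · exact isClosed_eq (hb.mul ha) continuous_const
    have hSeq : S = a ⁻¹' {x | IsUnit x} := by
      ext t
      constructor
      · rintro ⟨h1, h2⟩
        exact ⟨⟨a t, b t, h1, h2⟩, rfl⟩
      · rintro ⟨u, hu⟩
        have h := (hmp t).1
        rw [← hu] at h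
        have hb' : b t = ((u⁻¹ : Aˣ) : A) := by
          have h2 := congrArg (fun x => ((u⁻¹ : Aˣ) : A) * x * ((u⁻¹ : Aˣ) : A)) h
          simpa [mul_assoc] using h2
        constructor
        · rw [← hu, hb']; simp
        · rw [← hu, hb']; simp
    have hSop : IsOpen S := hSeq ▸ Units.isOpen.preimage ha
    have hne : (0 : I) ∈ S := by
      constructor
      · rw [← hu₀, hb₀]; simp
      · rw [← hu₀, hb₀]; simp
    have : S = Set.univ := IsClopen.eq_univ ⟨hScl, hSop⟩ ⟨0, hne⟩
    intro t
    have : t ∈ S := this ▸ Set.mem_univ t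
    exact this
  have mem : ∀ t, a t ∈ InvertibleIsometries A := by
    intro t
    refine ⟨⟨a t, b t, (key t).1, (key t).2⟩, rfl, ?_, ?_⟩
    · refine le_antisymm (hnorm t).1 ?_
      have h1 : (1 : ℝ) = ‖a t * b t‖ := by rw [(key t).1, norm_one]
      calc (1 : ℝ) = ‖a t * b t‖ := h1
        _ ≤ ‖a t‖ * ‖b t‖ := norm_mul_le _ _
        _ ≤ ‖a t‖ * 1 := by
            exact mul_le_mul_of_nonneg_left (hnorm t).2 (norm_nonneg _)
        _ = ‖a t‖ := mul_one _
    · refine le_antisymm (hnorm t).2 ?_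
      calc (1 : ℝ) = ‖b t * a t‖ := by rw [(key t).2, norm_one]
        _ ≤ ‖b t‖ * ‖a t‖ := norm_mul_le _ _
        _ ≤ ‖b t‖ * 1 := mul_le_mul_of_nonneg_left (hnorm t).1 (norm_nonneg _)
        _ = ‖b t‖ := mul_one _
  exact ⟨⟨⟨a, ha⟩, rfl, rfl⟩, fun t => mem t⟩
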